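/- A convex curve γ has constant u-width (γ(θ) - γ(θ+π) = 2c·u(θ) for some constant c) if and only if γ is parallel to u (tangents of γ at θ are parallel to tangents of u at θ). -/

import Mathlib

open Real

/-- Determinant of two plane vectors. -/
noncomputable def det2 (w₁ w₂ : ℝ × ℝ) : ℝ := w₁.1 * w₂.2 - w₁.2 * w₂.1

lemma hd_fst {a : ℝ → ℝ × ℝ} {a' : ℝ × ℝ} {θ : ℝ} (h : HasDerivAt a a' θ) :
    HasDerivAt (fun t => (a t).1) a'.1 θ := by
  simpa using h.hasFDerivAt.fst.hasDerivAt

lemma hd_snd {a : ℝ → ℝ × ℝ} {a' : ℝ × ℝ} {θ : ℝ} (h : HasDerivAt a a' θ) :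
    HasDerivAt (fun t => (a t).2) a'.2 θ := by
  simpa using h.hasFDerivAt.snd.hasDerivAt

lemma hd_det2 {a b : ℝ → ℝ × ℝ} {a' b' : ℝ × ℝ} {θ : ℝ}
    (ha : HasDerivAt a a' θ) (hb : HasDerivAt b b' θ) :
    HasDerivAt (fun t => det2 (a t) (b t)) (det2 a' (b θ) + det2 (a θ) b') θ := by
  have h1 := ((hd_fst ha).mul (hd_snd hb)).sub ((hd_snd ha).mul (hd_fst hb))
  refine h1.congr_deriv ?_
  simp [det2]; ring

/-- γ has constant u-width iff γ is parallel to u, i.e. each diameter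
γ(θ) - γ(θ+π) is a multiple of u(θ). -/
theorem constant_width_iff_parallel (u u' u'' γ γ' : ℝ → ℝ × ℝ) (p q : ℝ → ℝ)
    (hu : ∀ θ, HasDerivAt u (u' θ) θ)
    (hu' : ∀ θ, HasDerivAt u' (u'' θ) θ)
    (husym : ∀ θ, u (θ + π) = -u θ)
    (hudet : ∀ θ, 0 < det2 (u θ) (u' θ))
    (hup : ∀ θ, u' θ = p θ • (-Real.sin θ, Real.cos θ)) (hp : ∀ θ, 0 < p θ)
    (hγ : ∀ θ, HasDerivAt γ (γ' θ) θ)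
    (hγ' : ∀ θ, γ' θ = q θ • (-Real.sin θ, Real.cos θ)) (hq : ∀ θ, 0 < q θ) :
    (∃ c : ℝ, ∀ θ, γ θ - γ (θ + π) = (2 * c) • u θ) ↔
      (∀ θ, ∃ t : ℝ, γ θ - γ (θ + π) = t • u θ) := by
  constructor
  · rintro ⟨c, hc⟩ θ
    exact ⟨2 * c, hc θ⟩
  · intro h
    set w : ℝ → ℝ × ℝ := fun θ => γ θ - γ (θ + π) with hwdef
    have hw : ∀ θ, HasDerivAt w (γ' θ - γ' (θ + π)) θ := by
      intro θ
      have h2 : HasDerivAt (fun t : ℝ => γ (t + π)) ((1:ℝ) • γ' (θ + π)) θ :=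
        (hγ (θ + π)).scomp θ ((hasDerivAt_id θ).add_const π)
      exact ((hγ θ).sub h2).congr_deriv (by rw [one_smul])
    set t : ℝ → ℝ := fun θ => det2 (w θ) (u' θ) / det2 (u θ) (u' θ) with htdef
    have hg0 : ∀ θ, det2 (u θ) (u' θ) ≠ 0 := fun θ => (hudet θ).ne'
    have hwt : ∀ θ, w θ = t θ • u θ := by
      intro θ
      obtain ⟨s, hs⟩ := h θ
      have hws : w θ = s • u θ := hs
      have : det2 (w θ) (u' θ) = s * det2 (u θ) (u' θ) := by
        rw [hws]; simp [det2]; ring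
      have hts : t θ = s := by
        rw [htdef]; simp only
        rw [this, mul_div_assoc, div_self (hg0 θ), mul_one]
      rw [hts, hws]
    -- derivative of t is zero
    have ht0 : ∀ θ, HasDerivAt t 0 θ := by
      intro θ
      have hf : HasDerivAt (fun θ => det2 (w θ) (u' θ))
          (det2 (γ' θ - γ' (θ + π)) (u' θ) + det2 (w θ) (u'' θ)) θ :=
        hd_det2 (hw θ) (hu' θ)
      have hgd : HasDerivAt (fun θ => det2 (u θ) (u' θ))
          (det2 (u' θ) (u' θ) + det2 (u θ) (u'' θ)) θ :=
        hd_det2 (hu θ) (hu' θ)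
      have hz1 : det2 (γ' θ - γ' (θ + π)) (u' θ) = 0 := by
        simp [det2, hγ', hup, Real.sin_add, Real.cos_add]
        ring
      have hz2 : det2 (u' θ) (u' θ) = 0 := by simp [det2]; ring
      rw [hz1, zero_add] at hf
      rw [hz2, zero_add] at hgd
      have hdiv := hf.div hgd (hg0 θ)
      refine hdiv.congr_deriv ?_
      have hw' : det2 (w θ) (u'' θ) = t θ * det2 (u θ) (u'' θ) := by
        rw [hwt θ]; simp [det2]; ring
      have hfθ : det2 (w θ) (u' θ) = t θ * det2 (u θ) (u' θ) := by
        rw [hwt θ]; simp [det2]; ring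
      rw [hw', hfθ]
      ring
    have hconst : ∀ θ, t θ = t 0 := by
      intro θ
      have : ∀ x : ℝ, deriv t x = 0 := fun x => (ht0 x).deriv
      have hdiff : Differentiable ℝ t := fun x => (ht0 x).differentiableAt
      exact is_const_of_deriv_eq_zero hdiff this θ 0
    refine ⟨t 0 / 2, fun θ => ?_⟩
    have := hwt θ
    rw [hconst θ] at this
    rw [show (2 : ℝ) * (t 0 / 2) = t 0 by ring]
    exact this
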